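/- Let r ≥ 4 be an integer and let K_1 and K_2 be (r-2)-uniform hypergraphs on disjoint vertex sets such that for each i ∈ {1,2} and every ℓ with 2 ≤ ℓ ≤ 7, any ℓ distinct edges of K_i span more than (r-4)ℓ+2 vertices. Let t ≥ 1, let K_1^1, …, K_1^t be distinct edges of K_1, let K_2^1, …, K_2^t be distinct edges of K_2, and let x_1, y_1, …, x_t, y_t be 2t distinct vertices lying outside the vertex sets of K_1 and K_2. Then the r-graph F with edge set {K_1^j ∪ {x_j,y_j} : j ∈ [t]} ∪ {K_2^j ∪ {x_j,y_j} : j ∈ [t]} is (2r-3,2)-free, (3r-4,3)-free and (4r-7,4)-free. -/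

import Mathlib

open Finset

/-- `G` is an `r`-graph: a finite set of edges, each edge a finite set of exactly `r` vertices. -/
def IsRGraph {V : Type*} (r : ℕ) (G : Finset (Finset V)) : Prop :=
  ∀ e ∈ G, e.card = r

/-- `G` contains an `(s,k)`-configuration: `k` distinct edges spanning at most `s` vertices. -/
def HasConfig {V : Type*} [DecidableEq V] (s k : ℕ) (G : Finset (Finset V)) : Prop :=
  ∃ S ⊆ G, S.card = k ∧ (S.biUnion id).card ≤ s

/-- `G` is `(s,k)`-free. -/
def ConfigFree {V : Type*} [DecidableEq V] (s k : ℕ) (G : Finset (Finset V)) : Prop :=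
  ¬ HasConfig s k G

/-- Small configurations in the diamond construction: the union of the `t` diamonds
`{K_1^j ∪ {x_j,y_j}, K_2^j ∪ {x_j,y_j}}` is `(2r-3,2)`-, `(3r-4,3)`- and `(4r-7,4)`-free. -/
theorem diamonds_small_free {V : Type*} [DecidableEq V] (r : ℕ) (hr : 4 ≤ r)
    (K₁ K₂ : Finset (Finset V))
    (hK₁ : IsRGraph (r - 2) K₁) (hK₂ : IsRGraph (r - 2) K₂)
    (hdisj : Disjoint (K₁.biUnion id) (K₂.biUnion id))
    (hg₁ : ∀ ℓ, 2 ≤ ℓ → ℓ ≤ 7 → ∀ S ⊆ K₁, S.card = ℓ →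
      (r - 4) * ℓ + 2 < (S.biUnion id).card)
    (hg₂ : ∀ ℓ, 2 ≤ ℓ → ℓ ≤ 7 → ∀ S ⊆ K₂, S.card = ℓ →
      (r - 4) * ℓ + 2 < (S.biUnion id).card)
    (t : ℕ) (ht : 1 ≤ t)
    (E₁ E₂ : Fin t → Finset V)
    (hE₁ : ∀ j, E₁ j ∈ K₁) (hE₁inj : Function.Injective E₁)
    (hE₂ : ∀ j, E₂ j ∈ K₂) (hE₂inj : Function.Injective E₂)
    (x y : Fin t → V)
    (hxyinj : Function.Injective (Sum.elim x y))
    (hxout : ∀ j, x j ∉ K₁.biUnion id ∪ K₂.biUnion id)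
    (hyout : ∀ j, y j ∉ K₁.biUnion id ∪ K₂.biUnion id)
    (F : Finset (Finset V))
    (hF : F = (Finset.univ.image fun j : Fin t => E₁ j ∪ {x j, y j}) ∪
              (Finset.univ.image fun j : Fin t => E₂ j ∪ {x j, y j})) :
    ConfigFree (2 * r - 3) 2 F ∧ ConfigFree (3 * r - 4) 3 F ∧
      ConfigFree (4 * r - 7) 4 F := by
  classical
  set N₁ := K₁.biUnion id with hN₁
  set N₂ := K₂.biUnion id with hN₂
  have hxne : ∀ i j, x i ≠ y j := by
    intro i j h
    have : (Sum.inl i : Fin t ⊕ Fin t) = Sum.inr j :=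
      hxyinj (show Sum.elim x y (Sum.inl i) = Sum.elim x y (Sum.inr j) by simpa using h)
    simp at this
  have hxinj : Function.Injective x := by
    intro i j h
    have : (Sum.inl i : Fin t ⊕ Fin t) = Sum.inl j :=
      hxyinj (show Sum.elim x y (Sum.inl i) = Sum.elim x y (Sum.inl j) by simpa using h)
    simpa using this
  have hyinj : Function.Injective y := by
    intro i j h
    have : (Sum.inr i : Fin t ⊕ Fin t) = Sum.inr j :=
      hxyinj (show Sum.elim x y (Sum.inr i) = Sum.elim x y (Sum.inr j) by simpa using h)
    simpa using this
  have hxN : ∀ j, x j ∉ N₁ ∧ x j ∉ N₂ := by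
    intro j
    have := hxout j
    rw [Finset.mem_union] at this
    push_neg at this
    exact this
  have hyN : ∀ j, y j ∉ N₁ ∧ y j ∉ N₂ := by
    intro j
    have := hyout j
    rw [Finset.mem_union] at this
    push_neg at this
    exact this
  have hE₁N : ∀ j, E₁ j ⊆ N₁ := fun j v hv => Finset.mem_biUnion.mpr ⟨E₁ j, hE₁ j, hv⟩
  have hE₂N : ∀ j, E₂ j ⊆ N₂ := fun j v hv => Finset.mem_biUnion.mpr ⟨E₂ j, hE₂ j, hv⟩
  -- injectivity of the two families of edges of F
  have hAfinj : ∀ i j : Fin t, E₁ i ∪ {x i, y i} = E₁ j ∪ {x j, y j} → i = j := by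
    intro i j h
    have hx : x i ∈ E₁ j ∪ {x j, y j} := by
      rw [← h]; simp
    rw [Finset.mem_union] at hx
    rcases hx with hx | hx
    · exact absurd (hE₁N j hx) (hxN i).1
    · simp only [Finset.mem_insert, Finset.mem_singleton] at hx
      rcases hx with hx | hx
      · exact hxinj hx
      · exact absurd hx (hxne i j)
  have hBfinj : ∀ i j : Fin t, E₂ i ∪ {x i, y i} = E₂ j ∪ {x j, y j} → i = j := by
    intro i j h
    have hx : x i ∈ E₂ j ∪ {x j, y j} := by
      rw [← h]; simp
    rw [Finset.mem_union] at hx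
    rcases hx with hx | hx
    · exact absurd (hE₂N j hx) (hxN i).2
    · simp only [Finset.mem_insert, Finset.mem_singleton] at hx
      rcases hx with hx | hx
      · exact hxinj hx
      · exact absurd hx (hxne i j)
  have hABne : ∀ i j : Fin t, E₁ i ∪ {x i, y i} ≠ E₂ j ∪ {x j, y j} := by
    intro i j h
    have hpos : 0 < (E₁ i).card := by
      rw [hK₁ _ (hE₁ i)]; omega
    obtain ⟨v, hv⟩ := Finset.card_pos.mp hpos
    have hv1 : v ∈ N₁ := hE₁N i hv
    have hv2 : v ∈ E₂ j ∪ {x j, y j} := by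
      rw [← h]; exact Finset.mem_union_left _ hv
    rw [Finset.mem_union] at hv2
    rcases hv2 with hv2 | hv2
    · exact Finset.disjoint_left.mp hdisj hv1 (hE₂N j hv2)
    · simp only [Finset.mem_insert, Finset.mem_singleton] at hv2
      rcases hv2 with rfl | rfl
      · exact (hxN j).1 hv1
      · exact (hyN j).1 hv1
  -- generic lower bound on the span of J.biUnion E
  have bound : ∀ (K : Finset (Finset V)) (E : Fin t → Finset V), IsRGraph (r - 2) K →
      (∀ ℓ, 2 ≤ ℓ → ℓ ≤ 7 → ∀ S ⊆ K, S.card = ℓ → (r - 4) * ℓ + 2 < (S.biUnion id).card) →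
      (∀ j, E j ∈ K) → Function.Injective E →
      ∀ J : Finset (Fin t), J.card ≤ 4 →
      (J.card = 0 ∧ (J.biUnion E).card = 0) ∨ (J.card = 1 ∧ (J.biUnion E).card = r - 2) ∨
      (J.card = 2 ∧ (r - 4) * 2 + 2 < (J.biUnion E).card) ∨
      (J.card = 3 ∧ (r - 4) * 3 + 2 < (J.biUnion E).card) ∨
      (J.card = 4 ∧ (r - 4) * 4 + 2 < (J.biUnion E).card) := by
    intro K E hK hg hEK hEinj J hJ4
    have himg : (J.image E).biUnion id = J.biUnion E := by
      ext v; simp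
    have hcardi : (J.image E).card = J.card := Finset.card_image_of_injective _ hEinj
    have hsub : J.image E ⊆ K := by
      intro e he
      obtain ⟨j, _, rfl⟩ := Finset.mem_image.mp he
      exact hEK j
    rcases (by omega : J.card = 0 ∨ J.card = 1 ∨ J.card = 2 ∨ J.card = 3 ∨ J.card = 4)
      with h | h | h | h | h
    · refine Or.inl ⟨h, ?_⟩
      obtain rfl := Finset.card_eq_zero.mp h
      simp
    · refine Or.inr (Or.inl ⟨h, ?_⟩)
      obtain ⟨j, rfl⟩ := Finset.card_eq_one.mp h
      rw [Finset.singleton_biUnion]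
      exact hK _ (hEK j)
    · refine Or.inr (Or.inr (Or.inl ⟨h, ?_⟩))
      have := hg 2 (by norm_num) (by norm_num) (J.image E) hsub (by rw [hcardi, h])
      rwa [himg] at this
    · refine Or.inr (Or.inr (Or.inr (Or.inl ⟨h, ?_⟩)))
      have := hg 3 (by norm_num) (by norm_num) (J.image E) hsub (by rw [hcardi, h])
      rwa [himg] at this
    · refine Or.inr (Or.inr (Or.inr (Or.inr ⟨h, ?_⟩)))
      have := hg 4 (by norm_num) (by norm_num) (J.image E) hsub (by rw [hcardi, h])
      rwa [himg] at this
  -- main structural decomposition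
  have main : ∀ S : Finset (Finset V), S ⊆ F → S.card ≤ 4 →
      ∃ a b m u₁ u₂ : ℕ, S.card = a + b ∧ (S.biUnion id).card = u₁ + u₂ + 2 * m ∧
        a ≤ m ∧ b ≤ m ∧
        ((a = 0 ∧ u₁ = 0) ∨ (a = 1 ∧ u₁ = r - 2) ∨ (a = 2 ∧ (r - 4) * 2 + 2 < u₁) ∨
          (a = 3 ∧ (r - 4) * 3 + 2 < u₁) ∨ (a = 4 ∧ (r - 4) * 4 + 2 < u₁)) ∧
        ((b = 0 ∧ u₂ = 0) ∨ (b = 1 ∧ u₂ = r - 2) ∨ (b = 2 ∧ (r - 4) * 2 + 2 < u₂) ∨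
          (b = 3 ∧ (r - 4) * 3 + 2 < u₂) ∨ (b = 4 ∧ (r - 4) * 4 + 2 < u₂)) := by
    intro S hS hS4
    set J₁ := Finset.univ.filter (fun j : Fin t => (E₁ j ∪ {x j, y j}) ∈ S) with hJ₁
    set J₂ := Finset.univ.filter (fun j : Fin t => (E₂ j ∪ {x j, y j}) ∈ S) with hJ₂
    have hSeq : S = J₁.image (fun j => E₁ j ∪ {x j, y j}) ∪
        J₂.image (fun j => E₂ j ∪ {x j, y j}) := by
      ext e
      constructor
      · intro he
        have heF := hS he
        rw [hF] at heF
        simp only [Finset.mem_union, Finset.mem_image, Finset.mem_univ, true_and] at heF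
        rcases heF with ⟨j, hj⟩ | ⟨j, hj⟩
        · refine Finset.mem_union_left _ (Finset.mem_image.mpr ⟨j, ?_, hj⟩)
          rw [hJ₁, Finset.mem_filter]
          exact ⟨Finset.mem_univ j, by rw [hj]; exact he⟩
        · refine Finset.mem_union_right _ (Finset.mem_image.mpr ⟨j, ?_, hj⟩)
          rw [hJ₂, Finset.mem_filter]
          exact ⟨Finset.mem_univ j, by rw [hj]; exact he⟩
      · intro he
        rcases Finset.mem_union.mp he with he | he
        · obtain ⟨j, hjm, rfl⟩ := Finset.mem_image.mp he
          rw [hJ₁, Finset.mem_filter] at hjm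
          exact hjm.2
        · obtain ⟨j, hjm, rfl⟩ := Finset.mem_image.mp he
          rw [hJ₂, Finset.mem_filter] at hjm
          exact hjm.2
    have hd12 : Disjoint (J₁.image (fun j => E₁ j ∪ {x j, y j}))
        (J₂.image (fun j => E₂ j ∪ {x j, y j})) := by
      rw [Finset.disjoint_left]
      intro e he1 he2
      obtain ⟨i, _, rfl⟩ := Finset.mem_image.mp he1
      obtain ⟨j, _, hj⟩ := Finset.mem_image.mp he2
      exact hABne i j hj.symm
    have hScard : S.card = J₁.card + J₂.card := by
      rw [hSeq, Finset.card_union_of_disjoint hd12,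
        Finset.card_image_of_injective _ (fun i j h => hAfinj i j h),
        Finset.card_image_of_injective _ (fun i j h => hBfinj i j h)]
    have hbUeq : S.biUnion id = (J₁.biUnion E₁ ∪ J₂.biUnion E₂) ∪
        (J₁ ∪ J₂).biUnion (fun j => {x j, y j}) := by
      rw [hSeq]
      ext v
      simp only [Finset.mem_biUnion, Finset.mem_union, Finset.mem_image, id_eq,
        Finset.mem_insert, Finset.mem_singleton]
      constructor
      · rintro ⟨e, (⟨j, hj, rfl⟩ | ⟨j, hj, rfl⟩), hv⟩ <;>
          rcases Finset.mem_union.mp hv with hv | hv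
        · exact Or.inl (Or.inl ⟨j, hj, hv⟩)
        · simp only [Finset.mem_insert, Finset.mem_singleton] at hv
          exact Or.inr ⟨j, Or.inl hj, hv⟩
        · exact Or.inl (Or.inr ⟨j, hj, hv⟩)
        · simp only [Finset.mem_insert, Finset.mem_singleton] at hv
          exact Or.inr ⟨j, Or.inr hj, hv⟩
      · rintro ((⟨j, hj, hv⟩ | ⟨j, hj, hv⟩) | ⟨j, hj, hv⟩)
        · exact ⟨E₁ j ∪ {x j, y j}, Or.inl ⟨j, hj, rfl⟩, Finset.mem_union_left _ hv⟩
        · exact ⟨E₂ j ∪ {x j, y j}, Or.inr ⟨j, hj, rfl⟩, Finset.mem_union_left _ hv⟩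
        · rcases hj with hj | hj
          · refine ⟨E₁ j ∪ {x j, y j}, Or.inl ⟨j, hj, rfl⟩, Finset.mem_union_right _ ?_⟩
            simp only [Finset.mem_insert, Finset.mem_singleton]
            exact hv
          · refine ⟨E₂ j ∪ {x j, y j}, Or.inr ⟨j, hj, rfl⟩, Finset.mem_union_right _ ?_⟩
            simp only [Finset.mem_insert, Finset.mem_singleton]
            exact hv
    have hdE : Disjoint (J₁.biUnion E₁) (J₂.biUnion E₂) := by
      rw [Finset.disjoint_left]
      intro v hv hv'
      obtain ⟨i, _, hvi⟩ := Finset.mem_biUnion.mp hv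
      obtain ⟨j, _, hvj⟩ := Finset.mem_biUnion.mp hv'
      exact Finset.disjoint_left.mp hdisj (hE₁N i hvi) (hE₂N j hvj)
    have hdP : Disjoint (J₁.biUnion E₁ ∪ J₂.biUnion E₂)
        ((J₁ ∪ J₂).biUnion (fun j => {x j, y j})) := by
      rw [Finset.disjoint_right]
      intro v hv hv'
      obtain ⟨j, _, hvj⟩ := Finset.mem_biUnion.mp hv
      simp only [Finset.mem_insert, Finset.mem_singleton] at hvj
      have hvN : v ∈ N₁ ∨ v ∈ N₂ := by
        rcases Finset.mem_union.mp hv' with h' | h'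
        · obtain ⟨i, _, hvi⟩ := Finset.mem_biUnion.mp h'
          exact Or.inl (hE₁N i hvi)
        · obtain ⟨i, _, hvi⟩ := Finset.mem_biUnion.mp h'
          exact Or.inr (hE₂N i hvi)
      rcases hvj with rfl | rfl
      · rcases hvN with h | h
        · exact (hxN j).1 h
        · exact (hxN j).2 h
      · rcases hvN with h | h
        · exact (hyN j).1 h
        · exact (hyN j).2 h
    have hPcard : ((J₁ ∪ J₂).biUnion (fun j => ({x j, y j} : Finset V))).card =
        2 * (J₁ ∪ J₂).card := by
      rw [Finset.card_biUnion]
      · have h2 : ∀ j ∈ J₁ ∪ J₂, ({x j, y j} : Finset V).card = 2 :=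
          fun j _ => Finset.card_pair (hxne j j)
        rw [Finset.sum_congr rfl h2, Finset.sum_const, smul_eq_mul, mul_comm]
      · intro i _ j _ hij
        rw [Function.onFun, Finset.disjoint_left]
        intro v hv hv'
        simp only [Finset.mem_insert, Finset.mem_singleton] at hv hv'
        rcases hv with rfl | rfl <;> rcases hv' with h | h
        · exact hij (hxinj h)
        · exact hxne i j h
        · exact hxne j i h.symm
        · exact hij (hyinj h)
    refine ⟨J₁.card, J₂.card, (J₁ ∪ J₂).card, (J₁.biUnion E₁).card, (J₂.biUnion E₂).card,
      hScard, ?_, Finset.card_le_card Finset.subset_union_left,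
      Finset.card_le_card Finset.subset_union_right, ?_, ?_⟩
    · rw [hbUeq, Finset.card_union_of_disjoint hdP, Finset.card_union_of_disjoint hdE, hPcard]
    · exact bound K₁ E₁ hK₁ hg₁ hE₁ hE₁inj J₁ (by omega)
    · exact bound K₂ E₂ hK₂ hg₂ hE₂ hE₂inj J₂ (by omega)
  refine ⟨?_, ?_, ?_⟩ <;>
  · rintro ⟨S, hS, hcard, hle⟩
    obtain ⟨a, b, m, u₁, u₂, h1, h2, h3, h4, h5, h6⟩ := main S hS (by omega)
    omega
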